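/- Let L ≥ 1 be an integer, let η₀,…,η_L be positive reals, ρ₁,…,ρ_L ∈ [−1,1], and set μ_l = η_{l−1}/η_l for l = 1,…,L. Define δ₀ = 1 and, for l = 1,…,L, δ_l = μ_l|ρ_l|δ_{l−1} + √(1−ρ_l²)·√(1−μ_l²δ_{l−1}²), and assume |ρ_l| > μ_lδ_{l−1} for every l = 1,…,L. Then η_L·δ_L ≤ η₀ + Σ_{l=1}^{L} η_l√(1−ρ_l²). Consequently, for any σ_L > 0 and v > 0, the square-root cost Ẽ_L := σ_Lη_Lδ_L/v of the optimally weighted multilevel estimator satisfies Ẽ_L ≤ (σ_L/v)·(η₀ + Σ_{l=1}^{L} η_l√(1−ρ_l²)). -/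
import Mathlib


/-- bound on the normalised cost of the optimally weighted
multilevel estimator: `η_L δ_L ≤ η₀ + Σ_{l=1}^L η_l √(1−ρ_l²)`, and hence
`Ẽ_L = σ_L η_L δ_L / v ≤ (σ_L/v)(η₀ + Σ_{l=1}^L η_l √(1−ρ_l²))`. -/
theorem wmlmc_cost_bound
    (L : ℕ) (hL : 1 ≤ L)
    (η ρ μ δ : ℕ → ℝ)
    (hη : ∀ l ≤ L, 0 < η l)
    (hρ : ∀ l, 1 ≤ l → l ≤ L → ρ l ∈ Set.Icc (-1 : ℝ) 1)
    (hμ : ∀ l, 1 ≤ l → l ≤ L → μ l = η (l - 1) / η l)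
    (hδ0 : δ 0 = 1)
    (hδ : ∀ l, 1 ≤ l → l ≤ L →
      δ l = μ l * |ρ l| * δ (l - 1) +
        Real.sqrt (1 - ρ l ^ 2) * Real.sqrt (1 - μ l ^ 2 * δ (l - 1) ^ 2))
    (hcond : ∀ l, 1 ≤ l → l ≤ L → μ l * δ (l - 1) < |ρ l|) :
    η L * δ L ≤ η 0 + ∑ l ∈ Finset.Icc 1 L, η l * Real.sqrt (1 - ρ l ^ 2) ∧
    ∀ σL v : ℝ, 0 < σL → 0 < v →
      σL * η L * δ L / v ≤
        (σL / v) * (η 0 + ∑ l ∈ Finset.Icc 1 L, η l * Real.sqrt (1 - ρ l ^ 2)) := by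
  have key : ∀ l, l ≤ L → 0 ≤ δ l ∧
      η l * δ l ≤ η 0 + ∑ k ∈ Finset.Icc 1 l, η k * Real.sqrt (1 - ρ k ^ 2) := by
    intro l hl
    induction l with
    | zero => simp [hδ0]
    | succ n ih =>
      have hn : n ≤ L := Nat.le_of_succ_le hl
      obtain ⟨hδn, hbound⟩ := ih hn
      have h1 : 1 ≤ n + 1 := Nat.le_add_left 1 n
      have hμn : μ (n+1) = η n / η (n+1) := by
        have := hμ (n+1) h1 hl
        simpa using this
      have hδn1 := hδ (n+1) h1 hl
      simp only [Nat.add_sub_cancel] at hδn1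
      have hηn := hη n hn
      have hηn1 := hη (n+1) hl
      have hμpos : 0 < μ (n+1) := by rw [hμn]; positivity
      have hρle : |ρ (n+1)| ≤ 1 := by
        have h := hρ (n+1) h1 hl
        rw [abs_le]; exact ⟨h.1, h.2⟩
      have hsq2 : Real.sqrt (1 - μ (n+1) ^ 2 * δ n ^ 2) ≤ 1 := by
        apply Real.sqrt_le_one.mpr
        nlinarith [sq_nonneg (μ (n+1) * δ n)]
      have hsq1nonneg : (0:ℝ) ≤ Real.sqrt (1 - ρ (n+1) ^ 2) := Real.sqrt_nonneg _
      have hδn1nonneg : 0 ≤ δ (n+1) := by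
        rw [hδn1]
        have : 0 ≤ μ (n+1) * |ρ (n+1)| * δ n := by positivity
        positivity
      constructor
      · exact hδn1nonneg
      · have hmul : η (n+1) * μ (n+1) = η n := by
          rw [hμn]; field_simp
        have step : η (n+1) * δ (n+1) ≤ η n * δ n +
            η (n+1) * Real.sqrt (1 - ρ (n+1) ^ 2) := by
          rw [hδn1]
          have h2 : η (n+1) * (Real.sqrt (1 - ρ (n+1) ^ 2) *
              Real.sqrt (1 - μ (n+1) ^ 2 * δ n ^ 2)) ≤
              η (n+1) * Real.sqrt (1 - ρ (n+1) ^ 2) := by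
            have := mul_le_mul_of_nonneg_left hsq2 hsq1nonneg
            nlinarith
          have h3 : η (n+1) * (μ (n+1) * |ρ (n+1)| * δ n) ≤ η n * δ n := by
            have : η (n+1) * (μ (n+1) * |ρ (n+1)| * δ n) =
                (η (n+1) * μ (n+1)) * (|ρ (n+1)| * δ n) := by ring
            rw [this, hmul]
            have : |ρ (n+1)| * δ n ≤ δ n := by nlinarith [abs_nonneg (ρ (n+1))]
            nlinarith
          nlinarith
        rw [Finset.sum_Icc_succ_top h1]
        linarith
  obtain ⟨hδL, hmain⟩ := key L le_rfl
  refine ⟨hmain, fun σL v hσ hv => ?_⟩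
  have h1 : σL * η L * δ L / v = (σL / v) * (η L * δ L) := by ring
  rw [h1]
  have : 0 ≤ σL / v := by positivity
  exact mul_le_mul_of_nonneg_left hmain this
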